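/- There exists a finite constant C (depending only on m and r̃_1,…,r̃_m) such that for all integers k with |k| ≤ m, all v ∈ [0,1], all 0 ≤ t < t' < ∞, and all x ∈ ℤ: |∇_k p_{t'}(x) − ∇_k p_t(x)| ≤ C · min(1, t^{−1−v}) · (t'−t)^v, where ∇_k f(x) := f(x+k) − f(x). -/

import Mathlib

open Finset Real

/-- `φ(θ) := Σ_{k=1}^m r̃_k (1 − cos(kθ))`. -/
noncomputable def phiFn (m : ℕ) (r : ℕ → ℝ) (θ : ℝ) : ℝ :=
  ∑ k ∈ Finset.Icc 1 m, r k * (1 - Real.cos (k * θ))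

/-- The semi-discrete heat kernel
`p_t(x) := (2π)⁻¹ ∫_{−π}^{π} e^{−ixθ} e^{−tφ(θ)} dθ`, a real number since `φ` is even. -/
noncomputable def hk (m : ℕ) (r : ℕ → ℝ) (t : ℝ) (x : ℤ) : ℝ :=
  ((2 * (Real.pi : ℂ))⁻¹ * ∫ θ in (-Real.pi)..Real.pi,
      Complex.exp (-(x : ℂ) * Complex.I * (θ : ℂ)) *
        Complex.exp (-(t : ℂ) * ((phiFn m r θ : ℝ) : ℂ))).re



lemma norm_exp_I_sub_one_le (y : ℝ) : ‖Complex.exp ((y:ℂ) * Complex.I) - 1‖ ≤ |y| := by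
  have h : ‖Complex.exp ((y:ℂ) * Complex.I) - 1‖ ^ 2 = 2 - 2 * Real.cos y := by
    rw [Complex.sq_norm, Complex.normSq_apply]
    simp [Complex.exp_mul_I, Complex.cos_ofReal_re, Complex.sin_ofReal_re]
    nlinarith [Real.sin_sq_add_cos_sq y]
  nlinarith [Real.one_sub_sq_div_two_le_cos (x := y), norm_nonneg (Complex.exp ((y:ℂ) * Complex.I) - 1), abs_nonneg y, sq_abs y]

lemma one_sub_exp_le (u : ℝ) (hu : 0 ≤ u) : 1 - Real.exp (-u) ≤ min 1 u := by
  have h1 : 1 - Real.exp (-u) ≤ 1 := by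
    have := Real.exp_nonneg (-u); linarith
  have h2 : 1 - Real.exp (-u) ≤ u := by nlinarith [Real.add_one_le_exp (-u)]
  exact le_min h1 h2

lemma min_le_rpow (u v : ℝ) (hu : 0 ≤ u) (hv : 0 ≤ v) (hv1 : v ≤ 1) : min 1 u ≤ u ^ v := by
  rcases le_or_gt 1 u with h | h
  · calc min 1 u ≤ 1 := min_le_left _ _
    _ ≤ u ^ v := Real.one_le_rpow h hv
  · rcases eq_or_lt_of_le hu with h0 | h0
    · rw [← h0]
      simp [Real.rpow_nonneg]
    · calc min 1 u ≤ u := min_le_right _ _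
      _ = u ^ (1:ℝ) := (Real.rpow_one u).symm
      _ ≤ u ^ v := Real.rpow_le_rpow_of_exponent_ge h0 h.le hv1

lemma rpow_le_aux (u v t : ℝ) (hu : 0 ≤ u) (hv : 0 ≤ v) (hv1 : v ≤ 1) (ht : 0 < t) :
    u ^ v ≤ t ^ (-v) * (1 + t * u) := by
  have h1 : u ^ v = t ^ (-v) * (t * u) ^ v := by
    rw [Real.mul_rpow ht.le hu, Real.rpow_neg ht.le]
    rw [← mul_assoc, inv_mul_cancel₀ (by positivity : (t:ℝ) ^ v ≠ 0), one_mul]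
  rw [h1]
  have h2 : (0:ℝ) < t ^ (-v) := Real.rpow_pos_of_pos ht _
  gcongr
  rcases le_or_gt (t * u) 1 with h | h
  · calc (t*u) ^ v ≤ 1 := Real.rpow_le_one (by positivity) h hv
    _ ≤ 1 + t * u := by nlinarith
  · calc (t*u) ^ v ≤ (t*u) ^ (1:ℝ) := Real.rpow_le_rpow_of_exponent_le h.le hv1
    _ = t * u := Real.rpow_one _
    _ ≤ 1 + t * u := by nlinarith



lemma phi_nonneg (m : ℕ) (r : ℕ → ℝ) (hr : ∀ k ∈ Finset.Icc 1 m, 0 < r k) (θ : ℝ) :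
    0 ≤ phiFn m r θ := by
  apply Finset.sum_nonneg
  intro k hk
  have := (hr k hk).le
  have := Real.cos_le_one ((k:ℝ) * θ)
  nlinarith

lemma phi_le (m : ℕ) (r : ℕ → ℝ) (hr : ∀ k ∈ Finset.Icc 1 m, 0 < r k) (θ : ℝ) :
    phiFn m r θ ≤ 2 * ∑ k ∈ Finset.Icc 1 m, r k := by
  rw [Finset.mul_sum]
  apply Finset.sum_le_sum
  intro k hk
  have := (hr k hk).le
  have := Real.neg_one_le_cos ((k:ℝ) * θ)
  nlinarith

lemma phi_ge (m : ℕ) (hm : 1 ≤ m) (r : ℕ → ℝ) (hr : ∀ k ∈ Finset.Icc 1 m, 0 < r k)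
    (θ : ℝ) (hθ : |θ| ≤ π) : 2 / π ^ 2 * r 1 * θ ^ 2 ≤ phiFn m r θ := by
  have h1 : (1 : ℕ) ∈ Finset.Icc 1 m := by simp [hm]
  have hterm : r 1 * (1 - Real.cos ((1:ℕ) * θ)) ≤ phiFn m r θ := by
    apply Finset.single_le_sum (f := fun k => r k * (1 - Real.cos (k * θ))) _ h1
    intro k hk
    have h2 := Real.cos_le_one ((k:ℝ) * θ)
    exact mul_nonneg (hr k hk).le (by linarith)
  have hcos : Real.cos θ ≤ 1 - 2 / π ^ 2 * θ ^ 2 := Real.cos_le_one_sub_mul_cos_sq hθ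
  have hr1 := hr 1 h1
  simp only [Nat.cast_one, one_mul] at hterm
  nlinarith

lemma integral_abs_mul_exp_le (a : ℝ) (ha : 0 < a) :
    ∫ θ in (-π)..π, |θ| * Real.exp (-(a * θ ^ 2)) ≤ 1 / a := by
  have hc : Continuous fun θ : ℝ => |θ| * Real.exp (-(a * θ ^ 2)) := by continuity
  have hint : ∀ u w : ℝ, IntervalIntegrable (fun θ : ℝ => |θ| * Real.exp (-(a * θ ^ 2)))
      MeasureTheory.volume u w := fun u w => hc.intervalIntegrable u w
  have hd : ∀ θ : ℝ, HasDerivAt (fun s : ℝ => -(Real.exp (-(a * s ^ 2)) / (2 * a)))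
      (θ * Real.exp (-(a * θ ^ 2))) θ := by
    intro θ
    have h1 : HasDerivAt (fun s : ℝ => -(a * s ^ 2)) (-(a * (2 * θ))) θ := by
      exact (((hasDerivAt_pow 2 θ).const_mul a).neg).congr_deriv (by norm_num)
    have h2 := (h1.exp).div_const (2 * a)
    have h3 := h2.neg
    refine h3.congr_deriv ?_
    field_simp
  have hpos : ∀ s : ℝ, 0 < Real.exp (-(a * s ^ 2)) := fun s => Real.exp_pos _
  have e1 : ∫ θ in (0:ℝ)..π, θ * Real.exp (-(a * θ ^ 2)) =
      -(Real.exp (-(a * π ^ 2)) / (2 * a)) - -(Real.exp (-(a * 0 ^ 2)) / (2 * a)) := by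
    apply intervalIntegral.integral_eq_sub_of_hasDerivAt (fun θ _ => hd θ)
    exact (Continuous.intervalIntegrable (by continuity) _ _)
  have e2 : ∫ θ in (-π)..(0:ℝ), -θ * Real.exp (-(a * θ ^ 2)) =
      (Real.exp (-(a * 0 ^ 2)) / (2 * a)) - (Real.exp (-(a * (-π) ^ 2)) / (2 * a)) := by
    apply intervalIntegral.integral_eq_sub_of_hasDerivAt
      (f := fun s => Real.exp (-(a * s ^ 2)) / (2 * a))
    · intro θ _
      have h := (hd θ).neg
      simp only [Pi.neg_def, neg_neg] at h
      rw [neg_mul]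
      exact h
    · exact (Continuous.intervalIntegrable (by continuity) _ _)
  have c1 : ∫ θ in (0:ℝ)..π, |θ| * Real.exp (-(a * θ ^ 2)) =
      ∫ θ in (0:ℝ)..π, θ * Real.exp (-(a * θ ^ 2)) := by
    apply intervalIntegral.integral_congr
    intro θ hθ
    rw [Set.uIcc_of_le Real.pi_pos.le] at hθ
    dsimp only
    rw [abs_of_nonneg hθ.1]
  have c2 : ∫ θ in (-π)..(0:ℝ), |θ| * Real.exp (-(a * θ ^ 2)) =
      ∫ θ in (-π)..(0:ℝ), -θ * Real.exp (-(a * θ ^ 2)) := by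
    apply intervalIntegral.integral_congr
    intro θ hθ
    rw [Set.uIcc_of_le (by linarith [Real.pi_pos] : -π ≤ (0:ℝ))] at hθ
    dsimp only
    rw [abs_of_nonpos hθ.2]
  have hsplit : ∫ θ in (-π)..π, |θ| * Real.exp (-(a * θ ^ 2)) =
      (∫ θ in (-π)..(0:ℝ), |θ| * Real.exp (-(a * θ ^ 2))) +
      ∫ θ in (0:ℝ)..π, |θ| * Real.exp (-(a * θ ^ 2)) :=
    (intervalIntegral.integral_add_adjacent_intervals (hint _ _) (hint _ _)).symm
  rw [hsplit, c1, c2, e1, e2]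
  have h4 := (hpos π).le
  have h5 := hpos (-π)
  have h6 : Real.exp (-(a * 0 ^ 2)) = 1 := by norm_num
  rw [h6]
  have : Real.exp (-(a * (-π) ^ 2)) = Real.exp (-(a * π ^ 2)) := by ring_nf
  rw [this]
  have key : 1 / (2*a) - Real.exp (-(a * π ^ 2)) / (2*a) +
      (-(Real.exp (-(a * π ^ 2)) / (2*a)) - -(1 / (2*a))) = (1 - Real.exp (-(a * π ^ 2))) / a := by
    field_simp
    ring
  rw [key]
  have h7 : 1 - Real.exp (-(a * π ^ 2)) ≤ 1 := by linarith
  calc (1 - Real.exp (-(a * π ^ 2))) / a ≤ 1 / a := by gcongr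
  _ = 1 / a := rfl



lemma absF_eq (m : ℕ) (r : ℕ → ℝ) (x k : ℤ) (t t' θ : ℝ) :
    ‖(Complex.exp (-((x + k : ℤ) : ℂ) * Complex.I * (θ:ℂ)) -
          Complex.exp (-((x : ℤ) : ℂ) * Complex.I * (θ:ℂ))) *
        (Complex.exp (-(t' : ℂ) * ((phiFn m r θ : ℝ) : ℂ)) -
          Complex.exp (-(t : ℂ) * ((phiFn m r θ : ℝ) : ℂ)))‖ =
      ‖Complex.exp (((-(k * θ) : ℝ) : ℂ) * Complex.I) - 1‖ *
        |Real.exp (-(t' * phiFn m r θ)) - Real.exp (-(t * phiFn m r θ))| := by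
  rw [norm_mul]
  congr 1
  · have h1 : Complex.exp (-((x + k : ℤ) : ℂ) * Complex.I * (θ:ℂ)) =
        Complex.exp (-((x : ℤ) : ℂ) * Complex.I * (θ:ℂ)) *
          Complex.exp (((-(k * θ) : ℝ) : ℂ) * Complex.I) := by
      rw [← Complex.exp_add]
      congr 1
      push_cast
      ring
    rw [h1, show Complex.exp (-((x : ℤ) : ℂ) * Complex.I * (θ:ℂ)) *
          Complex.exp (((-(k * θ) : ℝ) : ℂ) * Complex.I) -
        Complex.exp (-((x : ℤ) : ℂ) * Complex.I * (θ:ℂ)) =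
        Complex.exp (-((x : ℤ) : ℂ) * Complex.I * (θ:ℂ)) *
          (Complex.exp (((-(k * θ) : ℝ) : ℂ) * Complex.I) - 1) by ring, norm_mul]
    have h2 : ‖Complex.exp (-((x : ℤ) : ℂ) * Complex.I * (θ:ℂ))‖ = 1 := by
      rw [Complex.norm_exp]
      norm_num [Complex.mul_re]
    rw [h2, one_mul]
  · have h3 : ∀ s : ℝ, Complex.exp (-(s : ℂ) * ((phiFn m r θ : ℝ) : ℂ)) =
        ((Real.exp (-(s * phiFn m r θ)) : ℝ) : ℂ) := by
      intro s
      rw [Complex.ofReal_exp]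
      congr 1
      push_cast
      ring
    rw [h3, h3, ← Complex.ofReal_sub, Complex.norm_real, Real.norm_eq_abs]



lemma phiFn_continuous (m : ℕ) (r : ℕ → ℝ) : Continuous (phiFn m r) := by
  unfold phiFn
  exact continuous_finset_sum _ fun k _ => by fun_prop

lemma hk_diff_le (m : ℕ) (r : ℕ → ℝ) (x k : ℤ) (t t' : ℝ) (g : ℝ → ℝ)
    (hgi : IntervalIntegrable g MeasureTheory.volume (-π) π)
    (hbound : ∀ θ ∈ Set.Icc (-Real.pi) Real.pi,
      ‖(Complex.exp (-((x + k : ℤ) : ℂ) * Complex.I * (θ:ℂ)) -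
          Complex.exp (-((x : ℤ) : ℂ) * Complex.I * (θ:ℂ))) *
        (Complex.exp (-(t' : ℂ) * ((phiFn m r θ : ℝ) : ℂ)) -
          Complex.exp (-(t : ℂ) * ((phiFn m r θ : ℝ) : ℂ)))‖ ≤ g θ) :
    |(hk m r t' (x + k) - hk m r t' x) - (hk m r t (x + k) - hk m r t x)| ≤
      (2 * π)⁻¹ * ∫ θ in (-π)..π, g θ := by
  have hππ : -π ≤ π := by linarith [Real.pi_pos]
  have hφc : Continuous fun θ : ℝ => ((phiFn m r θ : ℝ) : ℂ) :=
    Complex.continuous_ofReal.comp (phiFn_continuous m r)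
  set f : ℝ → ℤ → ℝ → ℂ := fun s y θ =>
    Complex.exp (-(y : ℂ) * Complex.I * (θ:ℂ)) * Complex.exp (-(s : ℂ) * ((phiFn m r θ : ℝ) : ℂ))
    with hf
  set F : ℝ → ℂ := fun θ =>
      (Complex.exp (-((x + k : ℤ) : ℂ) * Complex.I * (θ:ℂ)) -
          Complex.exp (-((x : ℤ) : ℂ) * Complex.I * (θ:ℂ))) *
        (Complex.exp (-(t' : ℂ) * ((phiFn m r θ : ℝ) : ℂ)) -
          Complex.exp (-(t : ℂ) * ((phiFn m r θ : ℝ) : ℂ))) with hF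
  have hosc : ∀ y : ℤ, Continuous fun θ : ℝ => Complex.exp (-(y : ℂ) * Complex.I * (θ:ℂ)) :=
    fun y => Complex.continuous_exp.comp (continuous_const.mul Complex.continuous_ofReal)
  have hexc : ∀ s : ℝ, Continuous fun θ : ℝ => Complex.exp (-(s : ℂ) * ((phiFn m r θ : ℝ) : ℂ)) :=
    fun s => Complex.continuous_exp.comp (continuous_const.mul hφc)
  have hcont : ∀ s : ℝ, ∀ y : ℤ, Continuous (f s y) := fun s y => (hosc y).mul (hexc s)
  have hint : ∀ s : ℝ, ∀ y : ℤ, IntervalIntegrable (f s y) MeasureTheory.volume (-π) π :=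
    fun s y => (hcont s y).intervalIntegrable _ _
  have hFcont : Continuous F :=
    ((hosc (x+k)).sub (hosc x)).mul ((hexc t').sub (hexc t))
  have hFeq : F = fun θ => f t' (x + k) θ - f t' x θ - (f t (x + k) θ - f t x θ) := by
    funext θ
    simp only [hF, hf]
    ring
  have hFint : (∫ θ in (-π)..π, F θ) =
      (∫ θ in (-π)..π, f t' (x + k) θ) - (∫ θ in (-π)..π, f t' x θ) -
      ((∫ θ in (-π)..π, f t (x + k) θ) - (∫ θ in (-π)..π, f t x θ)) := by
    rw [hFeq]
    rw [intervalIntegral.integral_sub (((hint t' (x+k)).sub (hint t' x)))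
      ((hint t (x+k)).sub (hint t x)),
      intervalIntegral.integral_sub (hint t' (x+k)) (hint t' x),
      intervalIntegral.integral_sub (hint t (x+k)) (hint t x)]
  have hre : (hk m r t' (x + k) - hk m r t' x) - (hk m r t (x + k) - hk m r t x) =
      ((2 * (Real.pi : ℂ))⁻¹ * ∫ θ in (-π)..π, F θ).re := by
    rw [hFint]
    simp only [hk, hf, mul_sub, Complex.sub_re]
  rw [hre]
  calc |((2 * (Real.pi : ℂ))⁻¹ * ∫ θ in (-π)..π, F θ).re|
      ≤ ‖(2 * (Real.pi : ℂ))⁻¹ * ∫ θ in (-π)..π, F θ‖ := Complex.abs_re_le_norm _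
    _ = (2 * π)⁻¹ * ‖∫ θ in (-π)..π, F θ‖ := by
        rw [norm_mul, norm_inv]
        congr 1
        rw [show (2 * (Real.pi:ℂ)) = ((2 * π : ℝ) : ℂ) by push_cast; ring,
          Complex.norm_real, Real.norm_eq_abs, abs_of_pos (by positivity)]
    _ ≤ (2 * π)⁻¹ * ∫ θ in (-π)..π, g θ := by
        apply mul_le_mul_of_nonneg_left _ (by positivity)
        calc ‖∫ θ in (-π)..π, F θ‖ ≤ ∫ θ in (-π)..π, ‖F θ‖ := by
              exact (intervalIntegral.norm_integral_le_integral_norm hππ).trans_eq rfl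
          _ ≤ ∫ θ in (-π)..π, g θ := by
              apply intervalIntegral.integral_mono_on hππ
                ((continuous_norm.comp hFcont).intervalIntegrable _ _) hgi hbound

lemma exp_diff_le (t t' u v : ℝ) (ht : 0 ≤ t) (htt' : t ≤ t') (hu : 0 ≤ u)
    (hv : 0 ≤ v) (hv1 : v ≤ 1) :
    |Real.exp (-(t' * u)) - Real.exp (-(t * u))| ≤
      Real.exp (-(t * u)) * ((t' - t) ^ v * u ^ v) := by
  have hmono : Real.exp (-(t' * u)) ≤ Real.exp (-(t * u)) :=
    Real.exp_le_exp.2 (by nlinarith)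
  rw [abs_of_nonpos (by linarith)]
  have hfac : Real.exp (-(t' * u)) = Real.exp (-(t * u)) * Real.exp (-((t' - t) * u)) := by
    rw [← Real.exp_add]; ring_nf
  rw [hfac]
  have h1 : Real.exp (-(t * u)) * (1 - Real.exp (-((t' - t) * u))) ≤
      Real.exp (-(t * u)) * ((t' - t) ^ v * u ^ v) := by
    apply mul_le_mul_of_nonneg_left _ (Real.exp_nonneg _)
    calc 1 - Real.exp (-((t' - t) * u)) ≤ min 1 ((t' - t) * u) :=
          one_sub_exp_le _ (by nlinarith)
      _ ≤ ((t' - t) * u) ^ v := min_le_rpow _ _ (by nlinarith) hv hv1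
      _ = (t' - t) ^ v * u ^ v := Real.mul_rpow (by linarith) hu
  calc -(Real.exp (-(t * u)) * Real.exp (-((t' - t) * u)) - Real.exp (-(t * u)))
      = Real.exp (-(t * u)) * (1 - Real.exp (-((t' - t) * u))) := by ring
    _ ≤ _ := h1

lemma one_add_mul_exp_le (w : ℝ) (hw : 0 ≤ w) :
    (1 + w) * Real.exp (-w) ≤ 3 * Real.exp (-(w / 2)) := by
  set E := Real.exp (-(w / 2)) with hE
  have hEpos : 0 < E := Real.exp_pos _
  have hE1 : E * Real.exp (w / 2) = 1 := by
    rw [hE, ← Real.exp_add]; norm_num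
  have hEle : E ≤ 1 := Real.exp_le_one_iff.2 (by linarith)
  have hsq : Real.exp (-w) = E * E := by
    rw [hE, ← Real.exp_add]; ring_nf
  have h1 : w ≤ 2 * Real.exp (w / 2) := by nlinarith [Real.add_one_le_exp (w / 2)]
  have h2 : w * E ≤ 2 := by
    have := mul_le_mul_of_nonneg_right h1 hEpos.le
    nlinarith [hE1]
  rw [hsq]
  nlinarith [mul_le_mul_of_nonneg_left (add_le_add hEle h2) hEpos.le]


theorem stmt8 (m : ℕ) (hm : 1 ≤ m) (r : ℕ → ℝ) (hr : ∀ k ∈ Finset.Icc 1 m, 0 < r k) :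
    ∃ C : ℝ, ∀ k : ℤ, |k| ≤ (m : ℤ) → ∀ v ∈ Set.Icc (0:ℝ) 1, ∀ t t' : ℝ, 0 ≤ t → t < t' →
      ∀ x : ℤ,
        |(hk m r t' (x + k) - hk m r t' x) - (hk m r t (x + k) - hk m r t x)| ≤
          C * (if t = 0 then 1 else min 1 (t ^ (-1 - v))) * (t' - t) ^ v := by
  classical
  have hπ : 0 < π := Real.pi_pos
  have h1m : (1 : ℕ) ∈ Finset.Icc 1 m := by simp [hm]
  have hr1 : 0 < r 1 := hr 1 h1m
  set S : ℝ := ∑ k ∈ Finset.Icc 1 m, r k with hS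
  have hSpos : 0 ≤ S := Finset.sum_nonneg fun k hk => (hr k hk).le
  refine ⟨max (2 * max 1 (2 * S)) (3 * m * π / (2 * r 1)), ?_⟩
  intro k hkm v hv t t' ht htt' x
  obtain ⟨hv0, hv1⟩ := hv
  set C : ℝ := max (2 * max 1 (2 * S)) (3 * m * π / (2 * r 1)) with hC
  set δ : ℝ := t' - t with hδdef
  have hδ : 0 < δ := by simp [hδdef]; linarith
  have hδv : 0 ≤ δ ^ v := Real.rpow_nonneg hδ.le v
  -- common facts
  have hu0 : ∀ θ : ℝ, 0 ≤ phiFn m r θ := phi_nonneg m r hr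
  have huS : ∀ θ : ℝ, phiFn m r θ ≤ 2 * S := phi_le m r hr
  have hfirst : ∀ θ : ℝ,
      ‖Complex.exp (((-(k * θ) : ℝ) : ℂ) * Complex.I) - 1‖ ≤ m * |θ| := by
    intro θ
    calc ‖Complex.exp (((-(k * θ) : ℝ) : ℂ) * Complex.I) - 1‖ ≤ |(-(k * θ) : ℝ)| :=
          norm_exp_I_sub_one_le _
      _ = |(k:ℝ)| * |θ| := by rw [abs_neg, abs_mul]
      _ ≤ m * |θ| := by
          apply mul_le_mul_of_nonneg_right _ (abs_nonneg θ)
          rw [← Int.cast_abs]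
          exact_mod_cast hkm
  have hfirst2 : ∀ θ : ℝ,
      ‖Complex.exp (((-(k * θ) : ℝ) : ℂ) * Complex.I) - 1‖ ≤ 2 := by
    intro θ
    have h := norm_sub_le (Complex.exp (((-(k * θ) : ℝ) : ℂ) * Complex.I)) 1
    apply h.trans
    simp [Complex.norm_exp, Complex.mul_re]
    norm_num
  rcases le_or_gt t 1 with hcase | hcase
  · -- easy case : t ≤ 1
    have hifeq : (if t = 0 then (1:ℝ) else min 1 (t ^ (-1 - v))) = 1 := by
      by_cases ht0 : t = 0
      · simp [ht0]
      · have ht0' : 0 < t := lt_of_le_of_ne ht (Ne.symm ht0)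
        rw [if_neg ht0]
        exact min_eq_left (Real.one_le_rpow_of_pos_of_le_one_of_nonpos ht0' hcase (by linarith))
    set c : ℝ := 2 * (max 1 (2 * S) * δ ^ v) with hc
    have hbound : ∀ θ ∈ Set.Icc (-π) π,
        ‖(Complex.exp (-((x + k : ℤ) : ℂ) * Complex.I * (θ:ℂ)) -
            Complex.exp (-((x : ℤ) : ℂ) * Complex.I * (θ:ℂ))) *
          (Complex.exp (-(t' : ℂ) * ((phiFn m r θ : ℝ) : ℂ)) -
            Complex.exp (-(t : ℂ) * ((phiFn m r θ : ℝ) : ℂ)))‖ ≤ c := by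
      intro θ _
      rw [absF_eq]
      have hup : phiFn m r θ ^ v ≤ max 1 (2 * S) := by
        rcases le_or_gt (phiFn m r θ) 1 with h | h
        · exact (Real.rpow_le_one (hu0 θ) h hv0).trans (le_max_left _ _)
        · calc phiFn m r θ ^ v ≤ phiFn m r θ ^ (1:ℝ) :=
              Real.rpow_le_rpow_of_exponent_le h.le hv1
            _ = phiFn m r θ := Real.rpow_one _
            _ ≤ max 1 (2 * S) := (huS θ).trans (le_max_right _ _)
      calc ‖Complex.exp (((-(k * θ) : ℝ) : ℂ) * Complex.I) - 1‖ *
            |Real.exp (-(t' * phiFn m r θ)) - Real.exp (-(t * phiFn m r θ))|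
          ≤ 2 * (Real.exp (-(t * phiFn m r θ)) * (δ ^ v * phiFn m r θ ^ v)) :=
            mul_le_mul (hfirst2 θ)
              (exp_diff_le t t' (phiFn m r θ) v ht htt'.le (hu0 θ) hv0 hv1)
              (abs_nonneg _) (by norm_num)
        _ ≤ 2 * (1 * (δ ^ v * max 1 (2 * S))) := by
            apply mul_le_mul_of_nonneg_left _ (by norm_num : (0:ℝ) ≤ 2)
            have hexple : Real.exp (-(t * phiFn m r θ)) ≤ 1 :=
              Real.exp_le_one_iff.2 (by nlinarith [mul_nonneg ht (hu0 θ)])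
            exact mul_le_mul hexple (mul_le_mul_of_nonneg_left hup hδv)
              (mul_nonneg hδv (Real.rpow_nonneg (hu0 θ) v)) zero_le_one
        _ = c := by rw [hc]; ring
    calc |(hk m r t' (x + k) - hk m r t' x) - (hk m r t (x + k) - hk m r t x)|
        ≤ (2 * π)⁻¹ * ∫ _ in (-π)..π, c := hk_diff_le m r x k t t' _ intervalIntegrable_const hbound
      _ = max 1 (2 * S) * (2 * δ ^ v) := by
          rw [intervalIntegral.integral_const, smul_eq_mul]
          field_simp [hπ.ne']
          ring
      _ ≤ C * (if t = 0 then 1 else min 1 (t ^ (-1 - v))) * δ ^ v := by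
          rw [hifeq, mul_one]
          have h1 : 2 * max 1 (2 * S) ≤ C := le_max_left _ _
          calc max 1 (2 * S) * (2 * δ ^ v) = (2 * max 1 (2 * S)) * δ ^ v := by ring
            _ ≤ C * δ ^ v := mul_le_mul_of_nonneg_right h1 hδv
  · -- hard case : 1 < t
    have ht0 : 0 < t := by linarith
    set a : ℝ := t * r 1 / π ^ 2 with ha
    have hapos : 0 < a := by positivity
    have htv : 0 ≤ t ^ (-v) := Real.rpow_nonneg ht0.le _
    set c : ℝ := 3 * m * δ ^ v * t ^ (-v) with hc
    have hcnn : 0 ≤ c := by positivity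
    have hbound : ∀ θ ∈ Set.Icc (-π) π,
        ‖(Complex.exp (-((x + k : ℤ) : ℂ) * Complex.I * (θ:ℂ)) -
            Complex.exp (-((x : ℤ) : ℂ) * Complex.I * (θ:ℂ))) *
          (Complex.exp (-(t' : ℂ) * ((phiFn m r θ : ℝ) : ℂ)) -
            Complex.exp (-(t : ℂ) * ((phiFn m r θ : ℝ) : ℂ)))‖ ≤
          c * (|θ| * Real.exp (-(a * θ ^ 2))) := by
      intro θ hθ
      rw [absF_eq]
      have hθπ : |θ| ≤ π := abs_le.2 ⟨hθ.1, hθ.2⟩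
      set u : ℝ := phiFn m r θ with hu
      have h5 : u ^ v ≤ t ^ (-v) * (1 + t * u) := rpow_le_aux u v t (hu0 θ) hv0 hv1 ht0
      have h6 : (1 + t * u) * Real.exp (-(t * u)) ≤ 3 * Real.exp (-(t * u / 2)) :=
        one_add_mul_exp_le (t * u) (by nlinarith [hu0 θ])
      have h7 : Real.exp (-(t * u / 2)) ≤ Real.exp (-(a * θ ^ 2)) := by
        apply Real.exp_le_exp.2
        have hphi := phi_ge m hm r hr θ hθπ
        have hπ2 : (0:ℝ) < π ^ 2 := by positivity
        have hphi' : 2 * r 1 * θ ^ 2 ≤ u * π ^ 2 := by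
          rw [show 2 / π ^ 2 * r 1 * θ ^ 2 = 2 * r 1 * θ ^ 2 / π ^ 2 by ring] at hphi
          exact (div_le_iff₀ hπ2).mp hphi
        rw [neg_le_neg_iff, ha, div_mul_eq_mul_div, div_le_div_iff₀ hπ2 (by norm_num)]
        nlinarith [mul_le_mul_of_nonneg_left hphi' ht]
      calc ‖Complex.exp (((-(k * θ) : ℝ) : ℂ) * Complex.I) - 1‖ *
            |Real.exp (-(t' * u)) - Real.exp (-(t * u))|
          ≤ (m * |θ|) * (Real.exp (-(t * u)) * (δ ^ v * u ^ v)) :=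
            mul_le_mul (hfirst θ)
              (exp_diff_le t t' u v ht htt'.le (hu0 θ) hv0 hv1)
              (abs_nonneg _) (by positivity)
        _ ≤ (m * |θ|) * (Real.exp (-(t * u)) * (δ ^ v * (t ^ (-v) * (1 + t * u)))) := by
            gcongr
        _ = ((m * |θ|) * δ ^ v * t ^ (-v)) * ((1 + t * u) * Real.exp (-(t * u))) := by ring
        _ ≤ ((m * |θ|) * δ ^ v * t ^ (-v)) * (3 * Real.exp (-(t * u / 2))) := by
            gcongr
        _ ≤ ((m * |θ|) * δ ^ v * t ^ (-v)) * (3 * Real.exp (-(a * θ ^ 2))) := by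
            gcongr
        _ = c * (|θ| * Real.exp (-(a * θ ^ 2))) := by rw [hc]; ring
    have hgc : Continuous fun θ : ℝ => c * (|θ| * Real.exp (-(a * θ ^ 2))) :=
      continuous_const.mul (continuous_abs.mul (Real.continuous_exp.comp
        ((continuous_const.mul (continuous_pow 2)).neg)))
    have hgint : IntervalIntegrable (fun θ : ℝ => c * (|θ| * Real.exp (-(a * θ ^ 2))))
        MeasureTheory.volume (-π) π := hgc.intervalIntegrable (-π) π
    calc |(hk m r t' (x + k) - hk m r t' x) - (hk m r t (x + k) - hk m r t x)|
        ≤ (2 * π)⁻¹ * ∫ θ in (-π)..π, c * (|θ| * Real.exp (-(a * θ ^ 2))) :=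
          hk_diff_le m r x k t t' _ hgint hbound
      _ ≤ (2 * π)⁻¹ * (c * (1 / a)) := by
          apply mul_le_mul_of_nonneg_left _ (by positivity : (0:ℝ) ≤ (2 * π)⁻¹)
          rw [intervalIntegral.integral_const_mul]
          exact mul_le_mul_of_nonneg_left (integral_abs_mul_exp_le a hapos) hcnn
      _ ≤ C * (if t = 0 then 1 else min 1 (t ^ (-1 - v))) * δ ^ v := by
          rw [if_neg ht0.ne']
          have hmin : min 1 (t ^ (-1 - v)) = t ^ (-1 - v) :=
            min_eq_right (Real.rpow_le_one_of_one_le_of_nonpos hcase.le (by linarith))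
          rw [hmin]
          have hsplit : t ^ (-1 - v) = t⁻¹ * t ^ (-v) := by
            rw [show (-1 - v) = (-1) + (-v) by ring, Real.rpow_add ht0, Real.rpow_neg_one]
          rw [hsplit]
          have heq : (2 * π)⁻¹ * (c * (1 / a)) =
              (3 * m * π / (2 * r 1)) * (t⁻¹ * t ^ (-v)) * δ ^ v := by
            rw [hc, ha]
            field_simp
          rw [heq]
          apply mul_le_mul_of_nonneg_right _ hδv
          apply mul_le_mul_of_nonneg_right (le_max_right _ _)
          positivity
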